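/- There exists an incomplete profile P for which the inclusion WP(P) ⊆ WP(M(P)) is strict. Concretely, let Ω = {A, B, C} and let P consist of a single agent of weight 1 whose partial order declares only A > B. Then B ∈ WP(M(P)) but B ∉ WP(P): there is a tournament extending M(P) and an agenda in which B wins, yet in no completion of P and no agenda does B win. -/

import Mathlib

open scoped Classical

/-- An agenda: a binary tree whose leaves are labelled with candidates. -/
inductive Agenda (α : Type) : Type
  | leaf (a : α) : Agenda α
  | node (l r : Agenda α) : Agenda α

namespace Agenda

/-- The list of leaf labels of an agenda. -/
def leaves {α : Type} : Agenda α → List α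
  | leaf a => [a]
  | node l r => leaves l ++ leaves r

/-- The list of depths of the leaves of an agenda. -/
def depths {α : Type} : Agenda α → List ℕ
  | leaf _ => [0]
  | node l r => (depths l ++ depths r).map (· + 1)

end Agenda

/-- A valid agenda: leaves labelled bijectively with the candidates. -/
def IsAgenda {α : Type} [Fintype α] (t : Agenda α) : Prop :=
  t.leaves.Nodup ∧ ∀ a : α, a ∈ t.leaves

/-- A balanced agenda: max and min leaf depths differ by at most 1. -/
def IsBalanced {α : Type} (t : Agenda α) : Prop :=
  ∀ d₁ ∈ t.depths, ∀ d₂ ∈ t.depths, d₁ ≤ d₂ + 1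

/-- A tournament: complete asymmetric directed graph on the candidates. -/
def IsTournament {α : Type} (T : α → α → Prop) : Prop :=
  (∀ a, ¬ T a a) ∧ ∀ a b : α, a ≠ b → (T a b ↔ ¬ T b a)

/-- Winner of an agenda under a tournament: each internal node is won by
whichever child's winner beats the other; the root's candidate wins. -/
noncomputable def winner {α : Type} (T : α → α → Prop) : Agenda α → α
  | .leaf a => a
  | .node l r => if T (winner T l) (winner T r) then winner T l else winner T r

/-- Strict partial order: asymmetric and transitive. -/
def IsSPO {α : Type} (r : α → α → Prop) : Prop :=
  (∀ a b, r a b → ¬ r b a) ∧ (∀ a b c, r a b → r b c → r a c)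

/-- Strict total order. -/
def IsSTO {α : Type} (r : α → α → Prop) : Prop :=
  IsSPO r ∧ ∀ a b : α, a ≠ b → r a b ∨ r b a

/-- An (incomplete) weighted profile: a finite sequence of agents, each with a
positive weight and a strict partial order, the sum of weights being odd. -/
structure Profile (α : Type) where
  agents : List (ℕ × (α → α → Prop))
  pos : ∀ p ∈ agents, 0 < p.1
  spo : ∀ p ∈ agents, IsSPO p.2
  oddSum : Odd (agents.map Prod.fst).sum

/-- Total weight of agents preferring `a` to `b`. -/
noncomputable def prefWeight {α : Type} (P : Profile α) (a b : α) : ℕ :=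
  (P.agents.map (fun p => if p.2 a b then p.1 else 0)).sum

/-- The majority graph of a profile. -/
def maj {α : Type} (P : Profile α) (a b : α) : Prop :=
  prefWeight P b a < prefWeight P a b

/-- `Q` is a completion of `P`: same weights, each agent's partial order is
replaced by a strict total order extending it. -/
def IsCompletion {α : Type} (P Q : Profile α) : Prop :=
  List.Forall₂ (fun p q => p.1 = q.1 ∧ IsSTO q.2 ∧ ∀ a b, p.2 a b → q.2 a b)
    P.agents Q.agents

/-- `T` extends the (incomplete majority) graph `G`. -/
def Extends {α : Type} (G T : α → α → Prop) : Prop := ∀ a b, G a b → T a b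

/-- `A` wins some agenda under `T`. -/
def WinsSome {α : Type} [Fintype α] (T : α → α → Prop) (A : α) : Prop :=
  ∃ t : Agenda α, IsAgenda t ∧ winner T t = A

/-- `A` wins every agenda under `T`. -/
def WinsAll {α : Type} [Fintype α] (T : α → α → Prop) (A : α) : Prop :=
  ∀ t : Agenda α, IsAgenda t → winner T t = A

/-- `A` wins some balanced agenda under `T`. -/
def FWinsSome {α : Type} [Fintype α] (T : α → α → Prop) (A : α) : Prop :=
  ∃ t : Agenda α, IsAgenda t ∧ IsBalanced t ∧ winner T t = A

/-- `A` wins every balanced agenda under `T`. -/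
def FWinsAll {α : Type} [Fintype α] (T : α → α → Prop) (A : α) : Prop :=
  ∀ t : Agenda α, IsAgenda t → IsBalanced t → winner T t = A

/-- Weak possible winner of a profile. -/
def WPp {α : Type} [Fintype α] (P : Profile α) (A : α) : Prop :=
  ∃ Q : Profile α, IsCompletion P Q ∧ WinsSome (maj Q) A

/-- Strong possible winner of a profile. -/
def SPp {α : Type} [Fintype α] (P : Profile α) (A : α) : Prop :=
  ∀ Q : Profile α, IsCompletion P Q → WinsSome (maj Q) A

/-- Weak Condorcet winner of a profile. -/
def WCp {α : Type} [Fintype α] (P : Profile α) (A : α) : Prop :=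
  ∃ Q : Profile α, IsCompletion P Q ∧ WinsAll (maj Q) A

/-- Strong Condorcet winner of a profile. -/
def SCp {α : Type} [Fintype α] (P : Profile α) (A : α) : Prop :=
  ∀ Q : Profile α, IsCompletion P Q → WinsAll (maj Q) A

/-- Weak possible winner of an incomplete majority graph. -/
def WPg {α : Type} [Fintype α] (G : α → α → Prop) (A : α) : Prop :=
  ∃ T : α → α → Prop, IsTournament T ∧ Extends G T ∧ WinsSome T A

/-- Strong possible winner of an incomplete majority graph. -/
def SPg {α : Type} [Fintype α] (G : α → α → Prop) (A : α) : Prop :=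
  ∀ T : α → α → Prop, IsTournament T → Extends G T → WinsSome T A

/-- Weak Condorcet winner of an incomplete majority graph. -/
def WCg {α : Type} [Fintype α] (G : α → α → Prop) (A : α) : Prop :=
  ∃ T : α → α → Prop, IsTournament T ∧ Extends G T ∧ WinsAll T A

/-- Strong Condorcet winner of an incomplete majority graph. -/
def SCg {α : Type} [Fintype α] (G : α → α → Prop) (A : α) : Prop :=
  ∀ T : α → α → Prop, IsTournament T → Extends G T → WinsAll T A

/-- A profile is unweighted if every agent has weight 1. -/
def IsUnweighted {α : Type} (P : Profile α) : Prop :=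
  ∀ p ∈ P.agents, p.1 = 1

/-- `Q` is the unweighted profile corresponding to `P`: each agent of
weight `k` is replaced by `k` agents of weight 1 with the same order. -/
def IsUnwVersion {α : Type} (P Q : Profile α) : Prop :=
  Q.agents = P.agents.flatMap (fun p => List.replicate p.1 (1, p.2))

/-- Fair strong Condorcet winner of a profile (balanced agendas only). -/
def FSCp {α : Type} [Fintype α] (P : Profile α) (A : α) : Prop :=
  ∀ Q : Profile α, IsCompletion P Q → FWinsAll (maj Q) A

/-- Fair weak Condorcet winner of a profile (balanced agendas only). -/
def FWCp {α : Type} [Fintype α] (P : Profile α) (A : α) : Prop :=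
  ∃ Q : Profile α, IsCompletion P Q ∧ FWinsAll (maj Q) A

/-- Fair weak possible winner of a profile (balanced agendas only). -/
def FWPp {α : Type} [Fintype α] (P : Profile α) (A : α) : Prop :=
  ∃ Q : Profile α, IsCompletion P Q ∧ FWinsSome (maj Q) A

/-- The three candidates. -/
inductive Cand : Type
  | A | B | C
deriving DecidableEq

instance : Fintype Cand :=
  ⟨{Cand.A, Cand.B, Cand.C}, fun x => by cases x <;> simp⟩

/-- The single agent's incomplete preference: only `A > B` is declared. -/
def onlyAB : Cand → Cand → Prop := fun x y => x = Cand.A ∧ y = Cand.B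

/-- The profile with one agent of weight 1 declaring only `A > B`. -/
def P16 : Profile Cand where
  agents := [(1, onlyAB)]
  pos := by
    intro p hp
    simp only [List.mem_singleton] at hp
    subst hp; norm_num
  spo := by
    intro p hp
    simp only [List.mem_singleton] at hp
    subst hp
    constructor
    · rintro a b ⟨rfl, rfl⟩ ⟨h, -⟩; cases h
    · rintro a b c ⟨rfl, rfl⟩ ⟨h, -⟩; cases h
  oddSum := by simp

lemma winner_mem {α : Type} (T : α → α → Prop) (t : Agenda α) :
    winner T t ∈ t.leaves := by
  induction t with
  | leaf a => simp [winner, Agenda.leaves]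
  | node l r ihl ihr =>
    simp only [winner, Agenda.leaves, List.mem_append]
    split
    · exact Or.inl ihl
    · exact Or.inr ihr

lemma winner_eq {α : Type} (T : α → α → Prop)
    (hasym : ∀ a b, T a b → ¬ T b a) (x : α) (t : Agenda α)
    (hx : x ∈ t.leaves) (h : ∀ y ∈ t.leaves, y ≠ x → T x y) :
    winner T t = x := by
  induction t with
  | leaf a =>
    simp only [Agenda.leaves, List.mem_singleton] at hx
    simp [winner, hx]
  | node l r ihl ihr =>
    simp only [Agenda.leaves, List.mem_append] at hx
    have h' : ∀ y, (y ∈ l.leaves ∨ y ∈ r.leaves) → y ≠ x → T x y := by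
      intro y hy; exact h y (by simpa [Agenda.leaves, List.mem_append] using hy)
    rcases hx with hx | hx
    · have hl : winner T l = x := ihl hx (fun y hy => h' y (Or.inl hy))
      by_cases hr : winner T r = x
      · simp [winner, hl, hr]
      · have : T x (winner T r) := h' _ (Or.inr (winner_mem T r)) hr
        simp [winner, hl, this]
    · have hr : winner T r = x := ihr hx (fun y hy => h' y (Or.inr hy))
      by_cases hl : winner T l = x
      · simp [winner, hl, hr]
      · have hT : ¬ T (winner T l) x :=
          hasym _ _ (h' _ (Or.inl (winner_mem T l)) hl)
        simp [winner, hl, hr, hT]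

/-- The cyclic tournament A→B→C→A. -/
def T16 : Cand → Cand → Prop := fun x y =>
  (x = Cand.A ∧ y = Cand.B) ∨ (x = Cand.B ∧ y = Cand.C) ∨ (x = Cand.C ∧ y = Cand.A)

lemma maj_P16 (a b : Cand) : maj P16 a b ↔ onlyAB a b := by
  simp only [maj, prefWeight, P16, List.map_cons, List.map_nil, List.sum_cons,
    List.sum_nil, add_zero]
  constructor
  · intro h
    by_contra hab
    simp [hab] at h
  · intro h
    have hba : ¬ onlyAB b a := by
      rcases h with ⟨rfl, rfl⟩
      rintro ⟨h1, -⟩; cases h1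
    simp [h, hba]

/-- The inclusion `WP(P) ⊆ WP(M(P))` can be strict:
for the profile `P16`, candidate `B` is a weak possible winner of the
majority graph `M(P16)` but not a weak possible winner of `P16`. -/
theorem stmt16 : WPg (maj P16) Cand.B ∧ ¬ WPp P16 Cand.B := by
  constructor
  · refine ⟨T16, ?_, ?_, ?_⟩
    · constructor
      · intro a; cases a <;> simp [T16]
      · intro a b hab; cases a <;> cases b <;> simp_all [T16]
    · intro a b hab
      rw [maj_P16] at hab
      rcases hab with ⟨rfl, rfl⟩
      simp [T16]
    · refine ⟨.node (.node (.leaf Cand.A) (.leaf Cand.C)) (.leaf Cand.B), ?_, ?_⟩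
      · constructor
        · simp [Agenda.leaves]
        · intro a; cases a <;> simp [Agenda.leaves]
      · simp [winner, T16]
  · rintro ⟨Q, hQ, t, ht, hw⟩
    -- extract the single agent of Q
    unfold IsCompletion at hQ
    simp only [P16] at hQ
    rcases List.forall₂_cons_left_iff.mp hQ with ⟨q, rest, ⟨hw1, hsto, hext⟩, hrest, hQa⟩
    have hrest' : rest = [] := by
      cases rest with
      | nil => rfl
      | cons a l => exact absurd hrest (by simp)
    subst hrest'
    have hAB : q.2 Cand.A Cand.B := hext _ _ ⟨rfl, rfl⟩
    -- maj Q = q.2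
    have hmaj : ∀ a b, maj Q a b ↔ q.2 a b := by
      intro a b
      simp only [maj, prefWeight, hQa, List.map_cons, List.map_nil, List.sum_cons,
        List.sum_nil, add_zero]
      constructor
      · intro h
        by_contra hab
        simp [hab] at h
      · intro h
        have hba : ¬ q.2 b a := hsto.1.1 _ _ h
        simp [h, hba, ← hw1]
    -- Condorcet winner is A or C, never B
    obtain ⟨⟨hasym, htrans⟩, htot⟩ := hsto
    have hasym' : ∀ a b, maj Q a b → ¬ maj Q b a := by
      intro a b h hb
      exact hasym a b ((hmaj a b).mp h) ((hmaj b a).mp hb)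
    by_cases hAC : q.2 Cand.A Cand.C
    · have : winner (maj Q) t = Cand.A := by
        apply winner_eq _ hasym' _ _ (ht.2 _)
        intro y hy hne
        rw [hmaj]
        cases y with
        | A => exact absurd rfl hne
        | B => exact hAB
        | C => exact hAC
      rw [this] at hw; cases hw
    · have hCA : q.2 Cand.C Cand.A := by
        rcases htot Cand.A Cand.C (by simp) with h | h
        · exact absurd h hAC
        · exact h
      have hCB : q.2 Cand.C Cand.B := htrans _ _ _ hCA hAB
      have : winner (maj Q) t = Cand.C := by
        apply winner_eq _ hasym' _ _ (ht.2 _)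
        intro y hy hne
        rw [hmaj]
        cases y with
        | A => exact hCA
        | B => exact hCB
        | C => exact absurd rfl hne
      rw [this] at hw; cases hw
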